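/- Matching characterization of D_k: call (i, j) a matched pair of a word w = w_1 w_2 ⋯ w_n over Σ_k if i < j, w_i is an opening parenthesis, w_j is a closing parenthesis, and μ_u(w_{i+1}⋯w_{j−1}) = ε. Then w ∈ D_k if and only if μ_u(w) = ε and for every matched pair (i, j) of w the types agree, i.e., w_i = ⟨_s and w_j = ⟩_s for the same s. -/

import Mathlib

/-- The alphabet `Σ_k` of `k` types of opening (`op`) and closing (`cl`) parentheses. -/
inductive Par (k : ℕ) where
  | op : Fin k → Par k
  | cl : Fin k → Par k
deriving DecidableEq

namespace Par

/-- One step of the type-unaware reduction: `μ_u(zσ)` computed from `μ_u(z)`. -/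
def muUStep {k : ℕ} (z : List (Par k)) (σ : Par k) : List (Par k) :=
  match z.getLast?, σ with
  | some (op _), cl _ => z.dropLast
  | _, _ => z ++ [σ]

/-- The type-unaware reduction `μ_u`. -/
def muU {k : ℕ} (w : List (Par k)) : List (Par k) := w.foldl muUStep []

/-- One step of the type-aware reduction: cancellation requires matching types. -/
def muAStep {k : ℕ} (z : List (Par k)) (σ : Par k) : List (Par k) :=
  match z.getLast?, σ with
  | some (op i), cl j => if i = j then z.dropLast else z ++ [σ]
  | _, _ => z ++ [σ]

/-- The type-aware reduction `μ_a`. -/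
def muA {k : ℕ} (w : List (Par k)) : List (Par k) := w.foldl muAStep []

/-- Is the symbol a closing parenthesis? -/
def isCl {k : ℕ} : Par k → Bool
  | cl _ => true
  | _ => false

/-- Is the symbol an opening parenthesis? -/
def isOp {k : ℕ} : Par k → Bool
  | op _ => true
  | _ => false

/-- `ℓ(w)`: the number of unmatched closing parentheses of `w`. -/
def ell {k : ℕ} (w : List (Par k)) : ℕ := (muU w).countP isCl

/-- `r(w)`: the number of unmatched opening parentheses of `w`. -/
def rr {k : ℕ} (w : List (Par k)) : ℕ := (muU w).countP isOp

/-- The Dyck language `D_k`: smallest set containing `ε`, closed under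
concatenation, and containing `⟨_i w ⟩_i` whenever it contains `w`. -/
inductive Dyck {k : ℕ} : List (Par k) → Prop where
  | nil : Dyck []
  | append {u v : List (Par k)} : Dyck u → Dyck v → Dyck (u ++ v)
  | wrap {w : List (Par k)} (i : Fin k) : Dyck w → Dyck (op i :: w ++ [cl i])

end Par

/-- `(i, j)` is a matched pair of `w` (0-indexed): `i < j`, `w_i` is an opening
parenthesis, `w_j` is a closing parenthesis, and `μ_u(w_{i+1}⋯w_{j−1}) = ε`. -/
def MatchedPair {k : ℕ} (w : List (Par k)) (i j : ℕ) : Prop :=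
  i < j ∧ j < w.length ∧
    (∃ s, w[i]? = some (Par.op s)) ∧ (∃ s, w[j]? = some (Par.cl s)) ∧
    Par.muU ((w.drop (i + 1)).take (j - i - 1)) = []

/-! ### Auxiliary development -/

namespace Par

variable {k : ℕ}

lemma muUStep_op (z : List (Par k)) (i : Fin k) : muUStep z (op i) = z ++ [op i] := by
  unfold muUStep
  rcases h : z.getLast? with _ | σ'
  · rfl
  · cases σ' <;> rfl

lemma muUStep_cl_of_op (z : List (Par k)) (i j : Fin k) (h : z.getLast? = some (op i)) :
    muUStep z (cl j) = z.dropLast := by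
  unfold muUStep; rw [h]

lemma muUStep_nil (σ : Par k) : muUStep [] σ = [σ] := by
  unfold muUStep; cases σ <;> rfl

lemma muUStep_cl_of_cl (z : List (Par k)) (i j : Fin k) (h : z.getLast? = some (cl i)) :
    muUStep z (cl j) = z ++ [cl j] := by
  unfold muUStep; rw [h]

/-- The balance of a word: number of opening minus number of closing parentheses. -/
def bal (w : List (Par k)) : ℤ := (w.countP isOp : ℤ) - w.countP isCl

@[simp] lemma bal_nil : bal ([] : List (Par k)) = 0 := by simp [bal]

@[simp] lemma bal_append (u v : List (Par k)) : bal (u ++ v) = bal u + bal v := by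
  simp [bal, List.countP_append]; ring

@[simp] lemma bal_op (i : Fin k) : bal [op i] = 1 := by
  simp [bal, List.countP_cons, isOp, isCl]

@[simp] lemma bal_cl (i : Fin k) : bal [cl i] = -1 := by
  simp [bal, List.countP_cons, isOp, isCl]

lemma bal_cons (σ : Par k) (t : List (Par k)) : bal (σ :: t) = bal [σ] + bal t := by
  simpa using bal_append [σ] t

lemma muU_append (u v : List (Par k)) : muU (u ++ v) = v.foldl muUStep (muU u) := by
  simp [muU, List.foldl_append]

lemma muU_snoc (u : List (Par k)) (σ : Par k) : muU (u ++ [σ]) = muUStep (muU u) σ := by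
  simp [muU_append, muU]

lemma getLast_of_getLast? {z : List (Par k)} {a : Par k} (h : z.getLast? = some a) :
    ∃ hz : z ≠ [], z.getLast hz = a := by
  have hz : z ≠ [] := by rintro rfl; simp at h
  refine ⟨hz, ?_⟩
  exact Option.some_injective _ (by rw [← List.getLast?_eq_getLast hz]; exact h)

lemma bal_muUStep (z : List (Par k)) (σ : Par k) :
    bal (muUStep z σ) = bal z + bal [σ] := by
  cases σ with
  | op i => rw [muUStep_op, bal_append]
  | cl j =>
      rcases h : z.getLast? with _ | a
      · have hz : z = [] := List.getLast?_eq_none_iff.mp h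
        subst hz
        rw [muUStep_nil]; simp
      · cases a with
        | cl i => rw [muUStep_cl_of_cl z i j h, bal_append]
        | op i =>
            rw [muUStep_cl_of_op z i j h]
            obtain ⟨hz, hlast⟩ := getLast_of_getLast? h
            have heq := List.dropLast_concat_getLast hz
            have hb : bal z = bal z.dropLast + 1 := by
              conv_lhs => rw [← heq]
              rw [bal_append, hlast, bal_op]
            rw [hb, bal_cl]; ring

lemma clcount_muUStep (z : List (Par k)) (σ : Par k) :
    z.countP isCl ≤ (muUStep z σ).countP isCl := by
  cases σ with
  | op i => rw [muUStep_op, List.countP_append]; omega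
  | cl j =>
      rcases h : z.getLast? with _ | a
      · have hz : z = [] := List.getLast?_eq_none_iff.mp h
        subst hz; simp
      · cases a with
        | cl i => rw [muUStep_cl_of_cl z i j h, List.countP_append]; omega
        | op i =>
            rw [muUStep_cl_of_op z i j h]
            obtain ⟨hz, hlast⟩ := getLast_of_getLast? h
            have heq := List.dropLast_concat_getLast hz
            have : z.countP isCl = z.dropLast.countP isCl := by
              conv_lhs => rw [← heq]
              rw [List.countP_append, hlast]; simp [isCl]
            omega

lemma bal_muU (w : List (Par k)) : bal (muU w) = bal w := by
  induction w using List.reverseRecOn with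
  | nil => simp [muU]
  | append_singleton u σ ih =>
      rw [muU_snoc, bal_muUStep, ih, bal_append]

lemma clcount_muU_mono (u v : List (Par k)) :
    (muU u).countP isCl ≤ (muU (u ++ v)).countP isCl := by
  induction v using List.reverseRecOn with
  | nil => simp
  | append_singleton v σ ih =>
      calc (muU u).countP isCl ≤ (muU (u ++ v)).countP isCl := ih
      _ ≤ _ := by rw [← List.append_assoc, muU_snoc]; exact clcount_muUStep _ _

lemma countP_op_add_cl (z : List (Par k)) : z.countP isOp + z.countP isCl = z.length := by
  induction z with
  | nil => simp
  | cons a t ih =>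
      cases a <;> simp [List.countP_cons, isOp, isCl] <;> omega

/-- The balance characterization of `μ_u(w) = ε`. -/
def Bal (w : List (Par k)) : Prop := (∀ n, 0 ≤ bal (w.take n)) ∧ bal w = 0

lemma clcount_muU_eq_zero (w : List (Par k)) (h : ∀ n, 0 ≤ bal (w.take n)) :
    (muU w).countP isCl = 0 := by
  induction w using List.reverseRecOn with
  | nil => simp [muU]
  | append_singleton u σ ih =>
      have hu : ∀ n, 0 ≤ bal (u.take n) := by
        intro n
        rcases le_or_gt n u.length with hn | hn
        · have := h n
          rwa [List.take_append, show n - u.length = 0 by omega,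
            List.take_zero, List.append_nil] at this
        · rw [List.take_of_length_le (by omega)]
          have := h u.length
          rwa [List.take_append, Nat.sub_self, List.take_zero,
            List.append_nil, List.take_of_length_le le_rfl] at this
      have ihu := ih hu
      rw [muU_snoc]
      cases σ with
      | op i => rw [muUStep_op, List.countP_append, ihu]; simp [isCl]
      | cl j =>
          rcases hl : (muU u).getLast? with _ | a
          · have hz : muU u = [] := List.getLast?_eq_none_iff.mp hl
            exfalso
            have hbu : bal u = 0 := by
              have := bal_muU u; rw [hz] at this; simpa using this.symm
            have := h (u.length + 1)
            rw [List.take_of_length_le (by simp)] at this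
            rw [bal_append, hbu, bal_cl] at this
            omega
          · cases a with
            | cl i =>
                exfalso
                obtain ⟨hz, hlast⟩ := getLast_of_getLast? hl
                have hmem : cl i ∈ muU u := hlast ▸ List.getLast_mem hz
                have := List.countP_eq_zero.mp ihu _ hmem
                simp [isCl] at this
            | op i =>
                rw [muUStep_cl_of_op _ i j hl]
                obtain ⟨hz, hlast⟩ := getLast_of_getLast? hl
                have heq := List.dropLast_concat_getLast hz
                have : (muU u).countP isCl = (muU u).dropLast.countP isCl := by
                  conv_lhs => rw [← heq]
                  rw [List.countP_append, hlast]; simp [isCl]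
                omega

lemma muU_eq_nil_iff (w : List (Par k)) : muU w = [] ↔ Bal w := by
  constructor
  · intro h
    constructor
    · intro n
      have h1 : (muU (w.take n)).countP isCl = 0 := by
        have := clcount_muU_mono (w.take n) (w.drop n)
        rw [List.take_append_drop, h] at this
        simpa using this
      have h2 := bal_muU (w.take n)
      have h3 := countP_op_add_cl (muU (w.take n))
      rw [← h2]
      unfold bal
      omega
    · have := bal_muU w; rw [h] at this; simpa using this.symm
  · rintro ⟨h1, h2⟩
    have hc := clcount_muU_eq_zero w h1
    have hb := bal_muU w
    have h3 := countP_op_add_cl (muU w)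
    rw [h2] at hb
    unfold bal at hb
    have : (muU w).length = 0 := by omega
    exact List.length_eq_zero_iff.mp this

lemma dyck_bal {w : List (Par k)} (h : Dyck w) : Bal w := by
  induction h with
  | nil => exact ⟨by simp, by simp⟩
  | append hu hv ihu ihv =>
      rename_i u v
      refine ⟨?_, by rw [bal_append, ihu.2, ihv.2]; ring⟩
      intro n
      rw [List.take_append, bal_append]
      have h1 := ihu.1 n
      have h2 := ihv.1 (n - u.length)
      linarith
  | wrap i hw ihw =>
      rename_i w'
      constructor
      · intro n
        rw [List.take_append, bal_append]
        have h1 : 0 ≤ bal (List.take n (op i :: w')) := by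
          cases n with
          | zero => simp
          | succ n =>
              rw [List.take_succ_cons, bal_cons, bal_op]
              have := ihw.1 n; linarith
        rcases le_or_gt n (w'.length + 1) with hn | hn
        · have h0 : n - (op i :: w').length = 0 := by simp; omega
          rw [h0, List.take_zero, bal_nil]
          linarith
        · have hfull : List.take n (op i :: w') = op i :: w' :=
            List.take_of_length_le (by simp; omega)
          have h2 : -1 ≤ bal (List.take (n - (op i :: w').length) [cl i]) := by
            have hpos : 1 ≤ n - (op i :: w').length := by simp; omega
            rw [List.take_of_length_le (by simpa using hpos)]; simp
          rw [hfull, bal_cons, bal_op, ihw.2]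
          linarith
      · show bal ((op i :: w') ++ [cl i]) = 0
        rw [bal_append, bal_cons, bal_op, bal_cl, ihw.2]; ring

/-- Segment of an append, lying entirely in the left part. -/
lemma seg_append_left (u v : List (Par k)) (a m : ℕ) (h : a + m ≤ u.length) :
    ((u ++ v).drop a).take m = (u.drop a).take m := by
  rw [List.drop_append, show a - u.length = 0 by omega, List.drop_zero,
    List.take_append, show m - (u.drop a).length = 0 by simp; omega,
    List.take_zero, List.append_nil]

/-- Segment of an append, lying entirely in the right part. -/
lemma seg_append_right (u v : List (Par k)) (a : ℕ) (h : u.length ≤ a) :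
    (u ++ v).drop a = v.drop (a - u.length) := by
  rw [List.drop_append, List.drop_eq_nil_of_le h, List.nil_append]

lemma bal_take_succ_op {u : List (Par k)} {a : ℕ} {s : Fin k} (h : u[a]? = some (op s)) :
    bal (u.take (a + 1)) = bal (u.take a) + 1 := by
  rw [List.take_succ, h]
  simp

lemma bal_take_succ_cl {u : List (Par k)} {a : ℕ} {s : Fin k} (h : u[a]? = some (cl s)) :
    bal (u.take (a + 1)) = bal (u.take a) - 1 := by
  rw [List.take_succ, h]
  simp
  ring

end Par

open Par

lemma dyck_agree {k : ℕ} {w : List (Par k)} (h : Dyck w) :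
    ∀ i j, MatchedPair w i j →
      ∃ s, w[i]? = some (Par.op s) ∧ w[j]? = some (Par.cl s) := by
  induction h with
  | nil =>
      intro i j hp
      exact absurd hp.2.1 (by simp)
  | append hu hv ihu ihv =>
      rename_i u v
      intro a b hp
      obtain ⟨hab, hblen, ⟨s, hs⟩, ⟨t, ht⟩, hinner⟩ := hp
      rw [List.length_append] at hblen
      rcases lt_or_ge b u.length with hbu | hbu
      · -- entirely inside u
        have hau : a < u.length := lt_trans hab hbu
        have ea : (u ++ v)[a]? = u[a]? := by rw [List.getElem?_append]; simp [hau]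
        have eb : (u ++ v)[b]? = u[b]? := by rw [List.getElem?_append]; simp [hbu]
        have einner : ((u ++ v).drop (a + 1)).take (b - a - 1) =
            (u.drop (a + 1)).take (b - a - 1) :=
          seg_append_left u v (a + 1) (b - a - 1) (by omega)
        obtain ⟨s', h1, h2⟩ := ihu a b
          ⟨hab, hbu, ⟨s, ea ▸ hs⟩, ⟨t, eb ▸ ht⟩, einner ▸ hinner⟩
        exact ⟨s', by rw [ea, h1], by rw [eb, h2]⟩
      · rcases le_or_gt u.length a with hua | hua
        · -- entirely inside v
          have ea : (u ++ v)[a]? = v[a - u.length]? := List.getElem?_append_right hua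
          have eb : (u ++ v)[b]? = v[b - u.length]? := List.getElem?_append_right hbu
          have edrop : (u ++ v).drop (a + 1) = v.drop (a - u.length + 1) := by
            rw [seg_append_right u v (a + 1) (by omega)]
            congr 1
            omega
          have einner : ((u ++ v).drop (a + 1)).take (b - a - 1) =
              (v.drop (a - u.length + 1)).take ((b - u.length) - (a - u.length) - 1) := by
            rw [edrop]
            congr 1
            omega
          obtain ⟨s', h1, h2⟩ := ihv (a - u.length) (b - u.length)
            ⟨by omega, by omega, ⟨s, ea ▸ hs⟩, ⟨t, eb ▸ ht⟩, einner ▸ hinner⟩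
          exact ⟨s', by rw [ea, h1], by rw [eb, h2]⟩
        · -- straddling: impossible
          exfalso
          have hBu := dyck_bal hu
          have hBinner := (muU_eq_nil_iff _).mp hinner
          -- the prefix of the inner segment up to the end of u is `u.drop (a+1)`
          have hm : u.length - (a + 1) ≤ b - a - 1 := by omega
          have hpre : (((u ++ v).drop (a + 1)).take (b - a - 1)).take (u.length - (a + 1)) =
              u.drop (a + 1) := by
            rw [List.take_take, min_eq_left hm]
            rw [seg_append_left u v (a + 1) (u.length - (a + 1)) (by omega)]
            exact List.take_of_length_le (by simp)
          have h1 : 0 ≤ bal (u.drop (a + 1)) := by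
            have := hBinner.1 (u.length - (a + 1))
            rwa [hpre] at this
          -- but the balance of `u.drop (a+1)` is negative
          have ea : (u ++ v)[a]? = u[a]? := by rw [List.getElem?_append]; simp [hua]
          have husplit : bal u = bal (u.take (a + 1)) + bal (u.drop (a + 1)) := by
            conv_lhs => rw [← List.take_append_drop (a + 1) u]
            rw [bal_append]
          have hop : bal (u.take (a + 1)) = bal (u.take a) + 1 :=
            bal_take_succ_op (by rw [← ea]; exact hs)
          have h2 := hBu.1 a
          have h3 := hBu.2
          omega
  | wrap i hw ihw =>
      rename_i w'
      intro a b hp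
      obtain ⟨hab, hblen, ⟨s, hs⟩, ⟨t, ht⟩, hinner⟩ := hp
      set x : List (Par k) := (op i :: w') ++ [cl i] with hx
      have hxlen : x.length = w'.length + 2 := by simp [hx]
      have hBw := dyck_bal hw
      -- getElem? facts for x
      have hx0 : x[0]? = some (op i) := by simp [hx]
      have hxmid : ∀ m, m < w'.length → x[m + 1]? = w'[m]? := by
        intro m hm
        rw [hx, List.cons_append, List.getElem?_cons_succ, List.getElem?_append]
        simp [hm]
      have hxlast : x[w'.length + 1]? = some (cl i) := by
        rw [hx, List.cons_append, List.getElem?_cons_succ,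
          List.getElem?_append_right le_rfl]
        simp
      have ha0 : a = 0 ∨ 1 ≤ a := by omega
      have hblast : b = w'.length + 1 ∨ b < w'.length + 1 := by omega
      -- drop of x past the head
      have hdrop : ∀ m, m ≤ w'.length → x.drop (m + 1) = w'.drop m ++ [cl i] := by
        intro m hm
        rw [hx, List.cons_append, List.drop_succ_cons, List.drop_append,
          show m - w'.length = 0 by omega, List.drop_zero]
      have hBinner := (muU_eq_nil_iff _).mp hinner
      rcases ha0 with rfl | ha1
      · rcases hblast with rfl | hbsmall
        · exact ⟨i, hx0, hxlast⟩
        · -- a = 0, b ≤ w'.length : impossible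
          exfalso
          have hb1 : 1 ≤ b := hab
          have einner : (x.drop 1).take (b - 1) = w'.take (b - 1) := by
            rw [show (1 : ℕ) = 0 + 1 by rfl, hdrop 0 (by omega), List.drop_zero,
              List.take_append, show b - 1 - w'.length = 0 by omega,
              List.take_zero, List.append_nil]
          have hbal0 : bal (w'.take (b - 1)) = 0 := by
            have := hBinner.2
            rwa [show b - 0 - 1 = b - 1 by omega, einner] at this
          have hcl : w'[b - 1]? = some (cl t) := by
            rw [← hxmid (b - 1) (by omega), show b - 1 + 1 = b by omega]
            exact ht
          have := hBw.1 b
          rw [show b = (b - 1) + 1 by omega, bal_take_succ_cl hcl] at this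
          omega
      · rcases hblast with rfl | hbsmall
        · -- b = last, a ≥ 1 : impossible
          exfalso
          have haw : a - 1 < w'.length := by omega
          have hopa : w'[a - 1]? = some (op s) := by
            rw [← hxmid (a - 1) haw, show a - 1 + 1 = a by omega]
            exact hs
          have einner : (x.drop (a + 1)).take (w'.length + 1 - a - 1) = w'.drop a := by
            rw [hdrop a (by omega), List.take_append,
              show w'.length + 1 - a - 1 - (w'.drop a).length = 0 by simp; omega,
              List.take_zero, List.append_nil]
            exact List.take_of_length_le (by simp; omega)
          have hbal0 : bal (w'.drop a) = 0 := by
            have := hBinner.2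
            rwa [einner] at this
          have hsplit : bal w' = bal (w'.take a) + bal (w'.drop a) := by
            conv_lhs => rw [← List.take_append_drop a w']
            rw [bal_append]
          have hop : bal (w'.take a) = bal (w'.take (a - 1)) + 1 := by
            have := bal_take_succ_op hopa
            rwa [show a - 1 + 1 = a by omega] at this
          have h2 := hBw.1 (a - 1)
          have h3 := hBw.2
          omega
        · -- interior pair, lift to w'
          have haw : a - 1 < w'.length := by omega
          have hbw : b - 1 < w'.length := by omega
          have ea : x[a]? = w'[a - 1]? := by
            rw [← hxmid (a - 1) haw, show a - 1 + 1 = a by omega]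
          have eb : x[b]? = w'[b - 1]? := by
            rw [← hxmid (b - 1) hbw, show b - 1 + 1 = b by omega]
          have einner : (x.drop (a + 1)).take (b - a - 1) =
              (w'.drop ((a - 1) + 1)).take ((b - 1) - (a - 1) - 1) := by
            rw [hdrop a (by omega), List.take_append,
              show b - a - 1 - (w'.drop a).length = 0 by simp; omega,
              List.take_zero, List.append_nil, show a - 1 + 1 = a by omega,
              show (b - 1) - (a - 1) - 1 = b - a - 1 by omega]
          obtain ⟨s', h1, h2⟩ := ihw (a - 1) (b - 1)
            ⟨by omega, hbw, ⟨s, ea ▸ hs⟩, ⟨t, eb ▸ ht⟩, einner ▸ hinner⟩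
          exact ⟨s', by rw [ea, h1], by rw [eb, h2]⟩

lemma bal_agree_dyck {k : ℕ} : ∀ (N : ℕ) (w : List (Par k)), w.length ≤ N → Par.Bal w →
    (∀ i j, MatchedPair w i j →
      ∃ s, w[i]? = some (Par.op s) ∧ w[j]? = some (Par.cl s)) → Par.Dyck w := by
  intro N
  induction N with
  | zero =>
      intro w hlen _ _
      have hw : w = [] := List.length_eq_zero_iff.mp (Nat.le_zero.mp hlen)
      subst hw
      exact Dyck.nil
  | succ N ih =>
      intro w hlen hBal hAgree
      rcases w with _ | ⟨σ, tl⟩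
      · exact Dyck.nil
      rw [List.length_cons] at hlen
      -- the head must be an opening parenthesis
      obtain ⟨s, rfl⟩ : ∃ s, σ = op s := by
        cases σ with
        | op s => exact ⟨s, rfl⟩
        | cl s =>
            exfalso
            have h1 := hBal.1 1
            rw [List.take_succ_cons, List.take_zero, bal_cl] at h1
            omega
      -- the tail is nonempty
      have hlen1 : 1 ≤ tl.length := by
        by_contra h
        have htl0 : tl = [] := List.length_eq_zero_iff.mp (by omega)
        subst htl0
        have := hBal.2
        rw [bal_op] at this
        omega
      classical
      -- find the matching closing parenthesis of the head
      have hPex : ∃ m, 1 ≤ m ∧ bal ((op s :: tl).take (m + 1)) = 0 :=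
        ⟨tl.length, hlen1, by
          rw [List.take_of_length_le (by simp)]; exact hBal.2⟩
      set j := Nat.find hPex with hjdef
      obtain ⟨hj1, hj2⟩ := Nat.find_spec hPex
      rw [← hjdef] at hj1 hj2
      have hjle : j ≤ tl.length := Nat.find_le ⟨hlen1, by
        rw [List.take_of_length_le (by simp)]; exact hBal.2⟩
      have hpos : ∀ m, 1 ≤ m → m ≤ j → 1 ≤ bal ((op s :: tl).take m) := by
        intro m h1 h2
        have hge := hBal.1 m
        rcases Nat.eq_or_lt_of_le h1 with h1' | h1'
        · rw [← h1', List.take_succ_cons, List.take_zero, bal_cons, bal_op, bal_nil]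
          omega
        · have hmin := Nat.find_min hPex (show m - 1 < j by omega)
          have hne : bal ((op s :: tl).take m) ≠ 0 := by
            intro h0
            exact hmin ⟨by omega, by rwa [show m - 1 + 1 = m by omega]⟩
          omega
      have hjlt : j < (op s :: tl).length := by simp; omega
      -- `w_j` is a closing parenthesis and `bal (take j) = 1`
      have hjget : (op s :: tl)[j]? = some ((op s :: tl)[j]'hjlt) :=
        List.getElem?_eq_getElem hjlt
      obtain ⟨tt, hclj0⟩ : ∃ tt, (op s :: tl)[j]? = some (cl tt) := by
        cases hc : (op s :: tl)[j]'hjlt with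
        | op i' =>
            exfalso
            have hup : bal ((op s :: tl).take (j + 1)) = bal ((op s :: tl).take j) + 1 :=
              bal_take_succ_op (by rw [hjget, hc])
            have := hpos j hj1 le_rfl
            omega
        | cl tt => exact ⟨tt, by rw [hjget, hc]⟩
      have hbaltakej : bal ((op s :: tl).take j) = 1 := by
        have hdn : bal ((op s :: tl).take (j + 1)) = bal ((op s :: tl).take j) - 1 :=
          bal_take_succ_cl hclj0
        have := hpos j hj1 le_rfl
        omega
      -- the inner segment for the pair (0, j) is balanced
      have htakej : (op s :: tl).take j = op s :: tl.take (j - 1) := by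
        conv_lhs => rw [show j = (j - 1) + 1 by omega, List.take_succ_cons]
      have hubal : bal (tl.take (j - 1)) = 0 := by
        rw [htakej, bal_cons, bal_op] at hbaltakej
        omega
      have hupre : ∀ m, 0 ≤ bal ((tl.take (j - 1)).take m) := by
        intro m
        rw [List.take_take]
        have hm1 : m ⊓ (j - 1) ≤ j - 1 := min_le_right _ _
        have hstep : bal ((op s :: tl).take (m ⊓ (j - 1) + 1)) =
            1 + bal (tl.take (m ⊓ (j - 1))) := by
          rw [List.take_succ_cons, bal_cons, bal_op]
        have := hpos (m ⊓ (j - 1) + 1) (by omega) (by omega)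
        omega
      have hmuU_u : muU (tl.take (j - 1)) = [] := (muU_eq_nil_iff _).mpr ⟨hupre, hubal⟩
      -- apply the hypothesis to the matched pair (0, j)
      have hmp0 : MatchedPair (op s :: tl) 0 j := by
        refine ⟨by omega, hjlt, ⟨s, by simp⟩, ⟨tt, hclj0⟩, ?_⟩
        rw [show (0 : ℕ) + 1 = 1 by rfl, show j - 0 - 1 = j - 1 by omega,
          List.drop_succ_cons, List.drop_zero]
        exact hmuU_u
      obtain ⟨s', hs0, hsj⟩ := hAgree 0 j hmp0
      have hss' : s' = s := by
        have e0 : (op s :: tl)[0]? = some (op s) := by simp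
        rw [e0] at hs0
        injection hs0 with h
        injection h with h
        exact h.symm
      rw [hss'] at hsj
      -- hsj : (op s :: tl)[j]? = some (cl s)
      -- set up the two parts
      have hvbal : bal (tl.drop j) = 0 := by
        have hsplit : bal (op s :: tl) =
            bal ((op s :: tl).take (j + 1)) + bal ((op s :: tl).drop (j + 1)) := by
          conv_lhs => rw [← List.take_append_drop (j + 1) (op s :: tl)]
          rw [bal_append]
        rw [hBal.2, hj2, List.drop_succ_cons] at hsplit
        omega
      have hvpre : ∀ m, 0 ≤ bal ((tl.drop j).take m) := by
        intro m
        have hsplit : (op s :: tl).take (j + 1 + m) =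
            (op s :: tl).take (j + 1) ++ ((op s :: tl).drop (j + 1)).take m := List.take_add
        have hb := hBal.1 (j + 1 + m)
        rw [hsplit, bal_append, hj2, List.drop_succ_cons] at hb
        omega
      -- matched pairs of the inner part
      have hAgreeU : ∀ a b, MatchedPair (tl.take (j - 1)) a b →
          ∃ s2, (tl.take (j - 1))[a]? = some (op s2) ∧
            (tl.take (j - 1))[b]? = some (cl s2) := by
        intro a b hp
        obtain ⟨hab, hb, ⟨s1, hs1⟩, ⟨t1, ht1⟩, hin⟩ := hp
        have hulen : (tl.take (j - 1)).length = j - 1 := by simp; omega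
        rw [hulen] at hb
        have ea : (tl.take (j - 1))[a]? = tl[a]? := by
          rw [List.getElem?_take]; simp [show a < j - 1 by omega]
        have eb : (tl.take (j - 1))[b]? = tl[b]? := by
          rw [List.getElem?_take]; simp [show b < j - 1 by omega]
        have ewa : (op s :: tl)[a + 1]? = tl[a]? := List.getElem?_cons_succ
        have ewb : (op s :: tl)[b + 1]? = tl[b]? := List.getElem?_cons_succ
        have einner : ((tl.take (j - 1)).drop (a + 1)).take (b - a - 1) =
            ((op s :: tl).drop (a + 1 + 1)).take ((b + 1) - (a + 1) - 1) := by
          rw [List.drop_take, List.take_take, List.drop_succ_cons,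
            min_eq_left (by omega), show (b + 1) - (a + 1) - 1 = b - a - 1 by omega]
        obtain ⟨s2, h1, h2⟩ := hAgree (a + 1) (b + 1)
          ⟨by omega, by simp; omega, ⟨s1, by rw [ewa, ← ea]; exact hs1⟩,
            ⟨t1, by rw [ewb, ← eb]; exact ht1⟩, by rw [← einner]; exact hin⟩
        exact ⟨s2, by rw [ea, ← ewa, h1], by rw [eb, ← ewb, h2]⟩
      have hAgreeV : ∀ a b, MatchedPair (tl.drop j) a b →
          ∃ s2, (tl.drop j)[a]? = some (op s2) ∧ (tl.drop j)[b]? = some (cl s2) := by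
        intro a b hp
        obtain ⟨hab, hb, ⟨s1, hs1⟩, ⟨t1, ht1⟩, hin⟩ := hp
        rw [List.length_drop] at hb
        have ea : (tl.drop j)[a]? = tl[j + a]? := List.getElem?_drop
        have eb : (tl.drop j)[b]? = tl[j + b]? := List.getElem?_drop
        have ewa : (op s :: tl)[j + a + 1]? = tl[j + a]? := List.getElem?_cons_succ
        have ewb : (op s :: tl)[j + b + 1]? = tl[j + b]? := List.getElem?_cons_succ
        have einner : ((tl.drop j).drop (a + 1)).take (b - a - 1) =
            ((op s :: tl).drop (j + a + 1 + 1)).take ((j + b + 1) - (j + a + 1) - 1) := by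
          rw [List.drop_drop, show j + a + 1 + 1 = (j + (a + 1)) + 1 by omega,
            List.drop_succ_cons, show (j + b + 1) - (j + a + 1) - 1 = b - a - 1 by omega]
        obtain ⟨s2, h1, h2⟩ := hAgree (j + a + 1) (j + b + 1)
          ⟨by omega, by simp; omega, ⟨s1, by rw [ewa, ← ea]; exact hs1⟩,
            ⟨t1, by rw [ewb, ← eb]; exact ht1⟩, by rw [← einner]; exact hin⟩
        exact ⟨s2, by rw [ea, ← ewa, h1], by rw [eb, ← ewb, h2]⟩
      -- apply the induction hypothesis
      have hDu : Dyck (tl.take (j - 1)) :=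
        ih (tl.take (j - 1)) (by simp; omega) ⟨hupre, hubal⟩ hAgreeU
      have hDv : Dyck (tl.drop j) :=
        ih (tl.drop j) (by simp; omega) ⟨hvpre, hvbal⟩ hAgreeV
      -- assemble
      have hD : Dyck (((op s :: tl.take (j - 1)) ++ [cl s]) ++ tl.drop j) :=
        Dyck.append (Dyck.wrap s hDu) hDv
      have htl : tl = tl.take (j - 1) ++ (cl s :: tl.drop j) := by
        have hj1lt : j - 1 < tl.length := by omega
        have hdropeq : tl.drop (j - 1) = tl[j - 1] :: tl.drop (j - 1 + 1) :=
          List.drop_eq_getElem_cons hj1lt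
        have hgetcl : tl[j - 1] = cl s := by
          have e1 : (op s :: tl)[j]? = tl[j - 1]? := by
            rw [show j = (j - 1) + 1 by omega]
            exact List.getElem?_cons_succ
          have e2 : tl[j - 1]? = some (tl[j - 1]) := List.getElem?_eq_getElem hj1lt
          rw [e1, e2] at hsj
          injection hsj
        rw [hgetcl, show j - 1 + 1 = j by omega] at hdropeq
        conv_lhs => rw [← List.take_append_drop (j - 1) tl]
        rw [hdropeq]
      have hfinal : op s :: tl = ((op s :: tl.take (j - 1)) ++ [cl s]) ++ tl.drop j := by
        conv_lhs => rw [htl]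
        simp
      rw [hfinal]
      exact hD

/-- `w ∈ D_k` iff `μ_u(w) = ε` and every matched pair of `w` has
agreeing types. -/
theorem dyck_iff_matched_pairs_agree {k : ℕ} (w : List (Par k)) :
    Par.Dyck w ↔
      Par.muU w = [] ∧
      ∀ i j, MatchedPair w i j →
        ∃ s, w[i]? = some (Par.op s) ∧ w[j]? = some (Par.cl s) := by
  constructor
  · intro h
    exact ⟨(muU_eq_nil_iff w).mpr (dyck_bal h), dyck_agree h⟩
  · rintro ⟨h1, h2⟩
    exact bal_agree_dyck w.length w le_rfl ((muU_eq_nil_iff w).mp h1) h2
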